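/- Let p1, q1, p2, q2, p3, q3, u3, v3 be positive integers with p_i < q_i, p3·v3 - q3·u3 = 1, u3 ≤ p3, v3 ≤ q3. Set A = p1/q1 + p2/q2 + p3/q3 - 2 and C = 2 - p1/q1 - p2/q2 - u3/v3. If p1/q1 + p2/q2 ≤ 1, or if A > 0 and C < 0, then (A·q3)/(C·v3) ≤ (p3 - q3)/(v3 - u3). -/

import Mathlib

theorem stmt_9 (p1 q1 p2 q2 p3 q3 u3 v3 : ℤ)
    (hp1 : 0 < p1) (hq1 : 0 < q1) (hp2 : 0 < p2) (hq2 : 0 < q2)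
    (hp3 : 0 < p3) (hq3 : 0 < q3) (hu3 : 0 < u3) (hv3 : 0 < v3)
    (h1 : p1 < q1) (h2 : p2 < q2) (h3 : p3 < q3)
    (hdet : p3 * v3 - q3 * u3 = 1) (hup : u3 ≤ p3) (hvq : v3 ≤ q3)
    (A C : ℚ)
    (hA : A = (p1 : ℚ) / q1 + (p2 : ℚ) / q2 + (p3 : ℚ) / q3 - 2)
    (hC : C = 2 - (p1 : ℚ) / q1 - (p2 : ℚ) / q2 - (u3 : ℚ) / v3)
    (hCne : C ≠ 0) (hvu : v3 ≠ u3)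
    (hcase : (p1 : ℚ) / q1 + (p2 : ℚ) / q2 ≤ 1 ∨ (0 < A ∧ C < 0)) :
    (A * q3) / (C * v3) ≤ ((p3 : ℚ) - q3) / ((v3 : ℚ) - u3) := by
  have hq1' : (0:ℚ) < q1 := by exact_mod_cast hq1
  have hq2' : (0:ℚ) < q2 := by exact_mod_cast hq2
  have hq3' : (0:ℚ) < q3 := by exact_mod_cast hq3
  have hv3' : (0:ℚ) < v3 := by exact_mod_cast hv3
  have hdetQ : (p3:ℚ) * v3 - q3 * u3 = 1 := by exact_mod_cast hdet
  have huv : u3 < v3 := by nlinarith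
  have huv' : (0:ℚ) < (v3:ℚ) - u3 := by
    have : (u3:ℚ) < v3 := by exact_mod_cast huv
    linarith
  have huv1 : (u3:ℚ)/v3 < 1 := by
    rw [div_lt_one hv3']
    exact_mod_cast huv
  have key : ((p3:ℚ) - q3) * (C * v3) - A * q3 * ((v3:ℚ) - u3)
      = (C + (u3:ℚ)/v3 - 1) := by
    subst hA hC
    linear_combination (norm := skip) (1 - (p1:ℚ)/q1 - (p2:ℚ)/q2) * hdetQ
    field_simp
    ring
  rcases hcase with hs | ⟨hApos, hCneg⟩
  · -- s ≤ 1 case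
    have hAneg : A < 0 := by
      have h3' : (p3:ℚ)/q3 < 1 := by
        rw [div_lt_one hq3']; exact_mod_cast h3
      rw [hA]; linarith
    have hCpos : 0 < C := by
      rw [hC]; linarith
    rw [div_le_div_iff₀ (by positivity) huv']
    have hs' : (0:ℚ) ≤ C + (u3:ℚ)/v3 - 1 := by rw [hC]; linarith
    linarith
  · have hb : 0 < -(C * v3) := by nlinarith
    rw [← neg_div_neg_eq, div_le_div_iff₀ hb huv']
    have hs' : C + (u3:ℚ)/v3 - 1 < 0 := by linarith
    nlinarith [key]
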